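/- Suppose $n > k \ge 2$ and $(\lambda,k,\mu)\to n$, i.e. every set mapping $F:[\lambda]^k\to[\lambda]^{<\mu}$ has a free set of size $n$. Then there exists a symmetric irreflexive $(k+1)$-ary relation $R$ on $\lambda$ such that: (i) no $(n+1)$-element subset of $\lambda$ is a complete $R$-hypergraph; and (ii) for every strong set mapping $F:[\lambda]^k\to[\lambda]^{<\mu}$ (meaning $v\subseteq F(v)$ for all $v\in[\lambda]^k$), there exists $w\in[\lambda]^n$ which is a complete $R$-hypergraph and satisfies $w\not\subseteq F(v)$ for every $v\in[w]^k$. -/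

import Mathlib

open Cardinal

/-- `F : [λ]^k → [λ]^{<μ}` is a set mapping. -/
def IsSetMapping {A : Type*} (μ : Cardinal) (k : ℕ) (F : Finset A → Set A) : Prop :=
  ∀ x : Finset A, x.card = k → F x ∩ ↑x = ∅ ∧ Cardinal.mk (F x) < μ

/-- `X` is free for `F`. -/
def IsFree {A : Type*} (k : ℕ) (F : Finset A → Set A) (X : Finset A) : Prop :=
  ∀ x ⊆ X, x.card = k → F x ∩ ↑X = ∅

/-- `(λ, k, μ) → n`. -/
def SetMappingArrow (A : Type*) (μ : Cardinal) (k n : ℕ) : Prop :=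
  ∀ F : Finset A → Set A, IsSetMapping μ k F →
    ∃ X : Finset A, X.card = n ∧ IsFree k F X

/-- `w` is a complete `R`-hypergraph: `R` holds on every injective `(k+1)`-tuple
from `w`. -/
def IsCompleteHypergraph {A : Type*} (k : ℕ) (R : (Fin (k + 1) → A) → Prop)
    (w : Finset A) : Prop :=
  ∀ α : Fin (k + 1) → A, Function.Injective α → (∀ i, α i ∈ w) → R α

namespace Stmt4Aux

open Set

universe u
variable {A : Type u}

/-- iterated cardinal successor -/
noncomputable def nuc (μ : Cardinal.{u}) : ℕ → Cardinal.{u}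
  | 0 => μ
  | j+1 => Order.succ (nuc μ j)

lemma nuc_lt_nuc_succ (μ : Cardinal.{u}) (j : ℕ) : nuc μ j < nuc μ (j+1) :=
  Order.lt_succ _

lemma nuc_mono (μ : Cardinal.{u}) : Monotone (nuc μ) := by
  apply monotone_nat_of_le_succ
  intro j; exact (nuc_lt_nuc_succ μ j).le

lemma le_nuc (μ : Cardinal.{u}) (j : ℕ) : μ ≤ nuc μ j := nuc_mono μ (Nat.zero_le j)

lemma aleph0_le_nuc {μ : Cardinal.{u}} (hμ : ℵ₀ ≤ μ) (j : ℕ) : ℵ₀ ≤ nuc μ j :=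
  hμ.trans (le_nuc μ j)

lemma lt_nuc_iff {μ : Cardinal.{u}} {c : Cardinal.{u}} {j : ℕ} :
    c < nuc μ (j+1) ↔ c ≤ nuc μ j := Order.lt_succ_iff

/-- finite unions of small sets are small -/
lemma mk_finset_biUnion_lt {μ : Cardinal.{u}} (hμ : ℵ₀ ≤ μ) {β : Type*} (s : Finset β)
    (g : β → Set A) (h : ∀ b ∈ s, #(g b) < μ) : #(⋃ b ∈ s, g b) < μ := by
  classical
  induction s using Finset.induction_on with
  | empty => simpa using aleph0_pos.trans_le hμ
  | @insert a s ha ih =>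
      have : (⋃ b ∈ insert a s, g b) = g a ∪ ⋃ b ∈ s, g b := by
        simp [Set.biUnion_insert]
      rw [this]
      refine lt_of_le_of_lt (mk_union_le _ _) ?_
      exact Cardinal.add_lt_of_lt hμ (h a (Finset.mem_insert_self a s))
        (ih fun b hb => h b (Finset.mem_insert_of_mem hb))

/-- indexed unions bounded by `c` -/
lemma mk_iUnion_le_of_le {c : Cardinal.{u}} (hc : ℵ₀ ≤ c) {ι : Type u} (f : ι → Set A)
    (hι : #ι ≤ c) (hf : ∀ i, #(f i) ≤ c) : #(⋃ i, f i) ≤ c := by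
  rcases isEmpty_or_nonempty ι with hI | hI
  · simp only [Set.iUnion_of_empty]
    simpa using aleph0_pos.trans_le hc |>.le
  · refine le_trans (mk_iUnion_le f) ?_
    calc #ι * ⨆ i, #(f i) ≤ c * c := mul_le_mul' hι (ciSup_le' hf)
    _ = c := Cardinal.mul_eq_self hc

/-- number of finsets inside a set `Z` -/
lemma mk_finsets_le {Z : Set A} {c : Cardinal.{u}} (hc : ℵ₀ ≤ c) (hZ : #Z ≤ c) :
    #{v : Finset A // ↑v ⊆ Z} ≤ c := by
  classical
  have hinj : Function.Injective
      (fun v : {v : Finset A // ↑v ⊆ Z} => (v.1.subtype (· ∈ Z))) := by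
    intro v w hvw
    simp only at hvw
    ext1
    ext a
    constructor
    · intro hav
      have haz : a ∈ Z := v.2 hav
      have h1 : (⟨a, haz⟩ : {x // x ∈ Z}) ∈ v.1.subtype (· ∈ Z) := by
        simp [Finset.mem_subtype, hav]
      rw [hvw] at h1
      simpa [Finset.mem_subtype] using h1
    · intro haw
      have haz : a ∈ Z := w.2 haw
      have h1 : (⟨a, haz⟩ : {x // x ∈ Z}) ∈ w.1.subtype (· ∈ Z) := by
        simp [Finset.mem_subtype, haw]
      rw [← hvw] at h1
      simpa [Finset.mem_subtype] using h1
  have h1 : #{v : Finset A // ↑v ⊆ Z} ≤ #(Finset Z) := mk_le_of_injective hinj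
  refine h1.trans ?_
  rcases finite_or_infinite Z with hfin | hinf
  · haveI := Fintype.ofFinite (↥Z)
    exact le_trans (Cardinal.lt_aleph0_of_finite (Finset Z)).le hc
  · rw [mk_finset_of_infinite]
    exact hZ

lemma exists_mem_notMem {G U : Set A} (h : #U < #G) : ∃ x ∈ G, x ∉ U := by
  by_contra hcon
  push_neg at hcon
  exact absurd (mk_le_mk_of_subset hcon) (not_le.mpr h)


lemma towerGen (μ : Cardinal.{u}) (hμ : ℵ₀ ≤ μ) (nuc : ℕ → Cardinal.{u})
    (hnuc0 : nuc 0 ≤ μ) (hnucs : ∀ {c : Cardinal.{u}} {j : ℕ}, c < nuc (j+1) → c ≤ nuc j)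
    (hnucinf : ∀ j, (0:Cardinal.{u}) < nuc j) :
    ∀ j : ℕ, ∀ S : Set A, #S ≤ nuc j →
    ∃ D : Finset A → Set A,
      (∀ v, #(D v) < μ) ∧ (∀ v, D v ∩ ↑v = ∅) ∧ (∀ v, D v ⊆ S) ∧
      (∀ u : Finset A, u.card = j + 2 → ↑u ⊆ S →
        ∃ v : Finset A, v ⊆ u ∧ v.card = j + 1 ∧ (D v ∩ ↑u).Nonempty) := by
  intro j
  induction j with
  | zero =>
    intro S hS
    classical
    set W := μ.ord.ToType with hWdef
    have hmkW : #W = μ := Cardinal.mk_ord_toType μ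
    obtain ⟨f⟩ := Cardinal.le_def (↥S) W |>.mp (by rw [hmkW]; exact hS.trans hnuc0)
    -- the "initial segment below x" sets
    set E : A → Set A := fun x =>
      ⋃ (hx : x ∈ S), (Subtype.val '' {w : ↥S | f w < f ⟨x, hx⟩}) with hEdef
    have hEsmall : ∀ x, #(E x) < μ := by
      intro x
      by_cases hx : x ∈ S
      · have h1 : E x ⊆ Subtype.val '' {w : ↥S | f w < f ⟨x, hx⟩} := by
          rw [hEdef]; exact Set.iUnion_subset fun _ => subset_rfl
        refine lt_of_le_of_lt (mk_le_mk_of_subset h1) ?_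
        refine lt_of_le_of_lt (Cardinal.mk_image_le) ?_
        have h2 : #{w : ↥S | f w < f ⟨x, hx⟩} ≤ #(Set.Iio (f ⟨x, hx⟩)) := by
          refine Cardinal.mk_le_of_injective (f := fun w =>
            (⟨f w.1, w.2⟩ : Set.Iio (f ⟨x, hx⟩))) ?_
          intro a b hab
          simp only [Subtype.mk_eq_mk] at hab
          exact Subtype.ext (f.injective (congrArg Subtype.val hab))
        exact lt_of_le_of_lt h2 (Cardinal.mk_Iio_ord_toType (f ⟨x, hx⟩))
      · have h1 : E x = ∅ := by rw [hEdef]; simp [hx]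
        rw [h1]
        simpa using aleph0_pos.trans_le hμ
    have hES : ∀ x, E x ⊆ S := by
      intro x y hy
      rw [hEdef] at hy
      simp only [Set.mem_iUnion] at hy
      obtain ⟨hx, w, _, rfl⟩ := hy
      exact w.2
    refine ⟨fun v => (⋃ x ∈ v, E x) \ ↑v, ?_, ?_, ?_, ?_⟩
    · intro v
      exact lt_of_le_of_lt (mk_le_mk_of_subset (Set.diff_subset))
        (mk_finset_biUnion_lt hμ v E (fun x _ => hEsmall x))
    · intro v; ext y; simp only [Set.mem_inter_iff, Set.mem_diff]; tauto
    · intro v y hy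
      obtain ⟨hy1, _⟩ := hy
      simp only [Set.mem_iUnion] at hy1
      obtain ⟨x, _, hyx⟩ := hy1
      exact hES x hyx
    · intro u hcard hu
      obtain ⟨p, q, hpq, hupq⟩ := Finset.card_eq_two.mp hcard
      have hp : p ∈ S := hu (by simp [hupq])
      have hq : q ∈ S := hu (by simp [hupq])
      have hne : f ⟨p, hp⟩ ≠ f ⟨q, hq⟩ := by
        intro hEq
        exact hpq (congrArg Subtype.val (f.injective hEq))
      rcases lt_or_gt_of_ne hne with hlt | hlt
      · refine ⟨{q}, by simp [hupq], by simp, p, ?_, by simp [hupq]⟩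
        constructor
        · simp only [Set.mem_iUnion]
          exact ⟨q, by simp, Set.mem_iUnion.mpr ⟨hq, ⟨⟨p, hp⟩, hlt, rfl⟩⟩⟩
        · simp [hpq]
      · refine ⟨{p}, by simp [hupq], by simp, q, ?_, by simp [hupq]⟩
        constructor
        · simp only [Set.mem_iUnion]
          exact ⟨p, by simp, Set.mem_iUnion.mpr ⟨hp, ⟨⟨q, hq⟩, hlt, rfl⟩⟩⟩
        · simp [Ne.symm hpq]
  | succ j ih =>
    intro S hS
    classical
    set W := (nuc (j+1)).ord.ToType with hWdef
    have hmkW : #W = nuc (j+1) := Cardinal.mk_ord_toType _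
    obtain ⟨f⟩ := Cardinal.le_def (↥S) W |>.mp (by rw [hmkW]; exact hS)
    set E : A → Set A := fun x =>
      ⋃ (hx : x ∈ S), (Subtype.val '' {w : ↥S | f w < f ⟨x, hx⟩}) with hEdef
    have hEbound : ∀ x, #(E x) ≤ nuc j := by
      intro x
      by_cases hx : x ∈ S
      · have h1 : E x ⊆ Subtype.val '' {w : ↥S | f w < f ⟨x, hx⟩} := by
          rw [hEdef]; exact Set.iUnion_subset fun _ => subset_rfl
        refine hnucs ?_
        refine lt_of_le_of_lt (mk_le_mk_of_subset h1) ?_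
        refine lt_of_le_of_lt (Cardinal.mk_image_le) ?_
        have h2 : #{w : ↥S | f w < f ⟨x, hx⟩} ≤ #(Set.Iio (f ⟨x, hx⟩)) := by
          refine Cardinal.mk_le_of_injective (f := fun w =>
            (⟨f w.1, w.2⟩ : Set.Iio (f ⟨x, hx⟩))) ?_
          intro a b hab
          simp only [Subtype.mk_eq_mk] at hab
          exact Subtype.ext (f.injective (congrArg Subtype.val hab))
        exact lt_of_le_of_lt h2 (Cardinal.mk_Iio_ord_toType (f ⟨x, hx⟩))
      · have h1 : E x = ∅ := by rw [hEdef]; simp [hx]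
        rw [h1]; simp
    have hES : ∀ x, E x ⊆ S := by
      intro x y hy
      rw [hEdef] at hy
      simp only [Set.mem_iUnion] at hy
      obtain ⟨hx, w, _, rfl⟩ := hy
      exact w.2
    have hxE : ∀ x, x ∉ E x := by
      intro x hx
      rw [hEdef] at hx
      simp only [Set.mem_iUnion] at hx
      obtain ⟨hxS, w, hw, hwx⟩ := hx
      have : w = ⟨x, hxS⟩ := Subtype.ext hwx
      rw [this] at hw
      simp only [Set.mem_setOf_eq] at hw
      exact lt_irrefl _ hw
    -- choose inner mappings by the induction hypothesis
    have hDx := fun x => (ih (E x) (hEbound x))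
    set Dx : A → Finset A → Set A := fun x => (hDx x).choose with hDxdef
    have hDxprop := fun x => (hDx x).choose_spec
    set D : Finset A → Set A := fun v =>
      ⋃ x ∈ v, ⋃ (_ : ∀ y ∈ v, y ≠ x → y ∈ E x), Dx x (v.erase x) with hDdef
    have hDsub : ∀ v, D v ⊆ ⋃ x ∈ v, Dx x (v.erase x) := by
      intro v y hy
      rw [hDdef] at hy
      simp only [Set.mem_iUnion] at hy
      obtain ⟨x, hxv, _, hyd⟩ := hy
      exact Set.mem_biUnion hxv hyd
    refine ⟨D, ?_, ?_, ?_, ?_⟩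
    · intro v
      refine lt_of_le_of_lt (mk_le_mk_of_subset (hDsub v)) ?_
      exact mk_finset_biUnion_lt hμ v _ (fun x _ => (hDxprop x).1 _)
    · intro v
      ext y
      simp only [Set.mem_inter_iff, Set.mem_empty_iff_false, iff_false, not_and]
      intro hyD hyv
      rw [hDdef] at hyD
      simp only [Set.mem_iUnion] at hyD
      obtain ⟨x, hxv, hcond, hyd⟩ := hyD
      by_cases hyx : y = x
      · subst hyx
        exact hxE y ((hDxprop y).2.2.1 _ hyd)
      · have : y ∈ v.erase x := Finset.mem_erase.mpr ⟨hyx, hyv⟩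
        have h0 := (hDxprop x).2.1 (v.erase x)
        have : y ∈ Dx x (v.erase x) ∩ ↑(v.erase x) := ⟨hyd, by exact_mod_cast this⟩
        rw [h0] at this
        exact this
    · intro v y hy
      rw [hDdef] at hy
      simp only [Set.mem_iUnion] at hy
      obtain ⟨x, hxv, hcond, hyd⟩ := hy
      exact hES x ((hDxprop x).2.2.1 _ hyd)
    · intro u hcard hu
      have hne : u.Nonempty := by
        rw [← Finset.card_pos, hcard]; omega
      haveI : Nonempty W := by
        rw [hWdef, Ordinal.toType_nonempty_iff_ne_zero]
        intro h0
        have h1 : nuc (j+1) = 0 := Cardinal.ord_eq_zero.mp h0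
        exact absurd h1 (ne_of_gt (hnucinf (j+1)))
      set g : A → W := fun a => if h : a ∈ S then f ⟨a, h⟩ else Classical.arbitrary W with hgdef
      obtain ⟨x, hxu, hmax⟩ := Finset.exists_max_image u g hne
      have hx : x ∈ S := hu hxu
      have hyE : ∀ y ∈ u, y ≠ x → y ∈ E x := by
        intro y hyu hyx
        have hy : y ∈ S := hu hyu
        have h1 : g y ≤ g x := hmax y hyu
        rw [hgdef] at h1
        simp only [dif_pos hy, dif_pos hx] at h1
        have h2 : f ⟨y, hy⟩ ≠ f ⟨x, hx⟩ := by
          intro hEq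
          exact hyx (congrArg Subtype.val (f.injective hEq))
        rw [hEdef]
        simp only [Set.mem_iUnion]
        exact ⟨hx, ⟨⟨y, hy⟩, lt_of_le_of_ne h1 h2, rfl⟩⟩
      set u' := u.erase x with hu'def
      have hu'card : u'.card = j + 2 := by
        rw [hu'def, Finset.card_erase_of_mem hxu, hcard]
        omega
      have hu'E : ↑u' ⊆ E x := by
        intro y hyu'
        have hyu' : y ∈ u' := hyu'
        rw [hu'def, Finset.mem_erase] at hyu'
        exact hyE y hyu'.2 hyu'.1
      obtain ⟨v', hv'sub, hv'card, z, hzD, hzu'⟩ :=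
        (hDxprop x).2.2.2 u' hu'card hu'E
      have hxv' : x ∉ v' := by
        intro hxv'
        have := hv'sub hxv'
        rw [hu'def, Finset.mem_erase] at this
        exact this.1 rfl
      refine ⟨insert x v', ?_, ?_, z, ?_, ?_⟩
      · refine Finset.insert_subset hxu (hv'sub.trans (Finset.erase_subset x u))
      · rw [Finset.card_insert_of_notMem hxv', hv'card]
      · rw [hDdef]
        simp only [Set.mem_iUnion]
        refine ⟨x, Finset.mem_insert_self x v', ?_, ?_⟩
        · intro y hyv hyx
          rcases Finset.mem_insert.mp hyv with h1 | h1
          · exact absurd h1 hyx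
          · exact hu'E (hv'sub h1)
        · rw [Finset.erase_insert hxv']
          exact hzD
      · have hz' : z ∈ u' := hzu'
        have : z ∈ u := (Finset.erase_subset x u) hz'
        exact_mod_cast this

/-- The transversal survivor lemma. -/
lemma survivorGen (μ : Cardinal.{u}) (hμ : ℵ₀ ≤ μ) (k : ℕ) (F : Finset A → Set A)
    (hF : ∀ v : Finset A, v.card = k → #(F v) < μ)
    (nuc : ℕ → Cardinal.{u})
    (hnuci : ∀ i, ℵ₀ ≤ nuc i)
    (hnucmono : ∀ i₁ i₂ : ℕ, i₁ ≤ i₂ → nuc i₁ ≤ nuc i₂)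
    (hμle : ∀ i, μ ≤ nuc i)
    (hμlt : μ < nuc 1)
    (hsucc : ∀ {c : Cardinal.{u}} {i : ℕ}, c < nuc (i+1) → c ≤ nuc i)
    (hstrict : ∀ i, nuc i < nuc (i+1)) :
    ∀ j : ℕ, 1 ≤ j → ∀ (Fix : Finset A) (G : ℕ → Set A),
    (∀ i, i ≤ j → nuc (max 1 i) ≤ #(G i)) →
    (∀ i, i ≤ j → #(G i) ≤ nuc (max 1 i)) →
    (∀ i1 i2, i1 < i2 → i2 ≤ j → ∀ a, a ∈ G i1 → a ∉ G i2) →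
    (∀ i, i ≤ j → ∀ a ∈ Fix, a ∉ G i) →
    ∃ x : ℕ → A, (∀ i, i ≤ j → x i ∈ G i) ∧
      (∀ v : Finset A, v.card = k →
        (↑v ⊆ ↑Fix ∪ {z : A | ∃ i, i ≤ j ∧ z = x i}) →
        (∃ i, i ≤ j ∧ x i ∉ v) →
        ∃ i, i ≤ j ∧ x i ∉ v ∧ x i ∉ F v) := by
  intro j hj
  induction j, hj using Nat.le_induction with
  | base =>
    intro Fix G hlow _ _ _
    classical
    -- the 2-dimensional grid argument
    have hμG0 : μ ≤ #(↥(G 0)) := (hμlt.le).trans (by simpa using hlow 0 (by norm_num))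
    obtain ⟨p, hp⟩ := Cardinal.le_mk_iff_exists_set.mp hμG0
    set A₀ : Set A := Subtype.val '' p with hA₀def
    have hA₀G : A₀ ⊆ G 0 := by
      rintro y ⟨w, _, rfl⟩; exact w.2
    have hA₀mk : #A₀ = μ := by
      rw [hA₀def, Cardinal.mk_image_eq Subtype.val_injective, hp]
    set st : A → Set A := fun b => ⋃ v ∈ (insert b Fix).powersetCard k, F v with hstdef
    have hstlt : ∀ b, #(st b) < μ := by
      intro b
      exact mk_finset_biUnion_lt hμ _ F
        (fun v hv => hF v (Finset.mem_powersetCard.mp hv).2)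
    have hFsubst : ∀ (b : A) (v : Finset A), v.card = k → v ⊆ insert b Fix →
        F v ⊆ st b := by
      intro b v hvk hvsub
      rw [hstdef]
      exact Set.subset_biUnion_of_mem (Finset.mem_powersetCard.mpr ⟨hvsub, hvk⟩)
    set U : Set A := ⋃ w : ↥A₀, st w.1 with hUdef
    have hUle : #U ≤ μ := by
      rw [hUdef]
      exact mk_iUnion_le_of_le hμ _ (le_of_eq hA₀mk) (fun w => (hstlt w.1).le)
    obtain ⟨b, hbG, hbU⟩ : ∃ b ∈ G 1, b ∉ U := by
      refine exists_mem_notMem (lt_of_le_of_lt hUle ?_)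
      exact lt_of_lt_of_le hμlt (by simpa using hlow 1 (by norm_num))
    obtain ⟨a, haA₀, hast⟩ : ∃ a ∈ A₀, a ∉ st b := by
      refine exists_mem_notMem ?_
      rw [hA₀mk]; exact hstlt b
    refine ⟨fun i => if i = 0 then a else b, ?_, ?_⟩
    · intro i hi
      interval_cases i
      · simpa using hA₀G haA₀
      · simpa using hbG
    · intro v hvk hvsub hne
      by_cases hbv : b ∈ v
      · -- escaper is a (at index 0)
        have hav : a ∉ v := by
          obtain ⟨i, hi, hxi⟩ := hne
          interval_cases i
          · simpa using hxi
          · simp at hxi; exact absurd hbv hxi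
        refine ⟨0, by norm_num, by simpa using hav, ?_⟩
        simp only [if_pos rfl]
        refine fun haF => hast (hFsubst b v hvk ?_ haF)
        intro y hyv
        rcases hvsub hyv with hyFix | ⟨i, hi, rfl⟩
        · exact Finset.mem_insert_of_mem hyFix
        · interval_cases i
          · simp only [if_pos rfl] at hyv ⊢
            exact absurd hyv hav
          · simp only [Nat.one_ne_zero, if_false]
            exact Finset.mem_insert_self b Fix
      · -- escaper is b (at index 1)
        refine ⟨1, le_rfl, by simpa using hbv, ?_⟩
        simp only [Nat.one_ne_zero, if_false]
        refine fun hbF => hbU ?_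
        have hFsub : F v ⊆ st a := by
          refine hFsubst a v hvk ?_
          intro y hyv
          rcases hvsub hyv with hyFix | ⟨i, hi, rfl⟩
          · exact Finset.mem_insert_of_mem hyFix
          · interval_cases i
            · simp only [if_pos rfl] at hyv ⊢
              exact Finset.mem_insert_self a Fix
            · simp only [Nat.one_ne_zero, if_false] at hyv
              exact absurd hyv hbv
        have : st a ⊆ U := by
          rw [hUdef]
          exact Set.subset_iUnion (fun w : ↥A₀ => st w.1) ⟨a, haA₀⟩
        exact this (hFsub hbF)
  | succ j hj ih =>
    intro Fix G hlow hhigh hdisj hfix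
    classical
    set Z : Set A := ↑Fix ∪ ⋃ i ∈ Finset.range (j+1), G i with hZdef
    have hZle : #Z ≤ nuc j := by
      refine hsucc ?_
      rw [hZdef]
      refine lt_of_le_of_lt (mk_union_le _ _) ?_
      refine Cardinal.add_lt_of_lt (hnuci (j+1)) ?_ ?_
      · exact lt_of_lt_of_le (Finset.finite_toSet Fix).lt_aleph0 (hnuci (j+1))
      · refine mk_finset_biUnion_lt (hnuci (j+1)) _ G ?_
        intro i hi
        have hij : i ≤ j := by have := Finset.mem_range.mp hi; omega
        have hmax : max 1 i ≤ j := Nat.max_le.mpr ⟨hj, hij⟩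
        exact lt_of_le_of_lt (le_trans (hhigh i (by omega)) (hnucmono _ _ hmax)) (hstrict j)
    set U : Set A := ⋃ w : {v : Finset A // v.card = k ∧ ↑v ⊆ Z}, F w.1 with hUdef
    have hι : #{v : Finset A // v.card = k ∧ ↑v ⊆ Z} ≤ nuc j := by
      refine le_trans (Cardinal.mk_le_of_injective
        (f := fun w : {v : Finset A // v.card = k ∧ ↑v ⊆ Z} =>
          (⟨w.1, w.2.2⟩ : {v : Finset A // ↑v ⊆ Z})) ?_) (mk_finsets_le (hnuci j) hZle)
      intro a1x b hab
      simp only [Subtype.mk.injEq] at hab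
      exact Subtype.ext hab
    have hUle : #U ≤ nuc j := by
      rw [hUdef]
      exact mk_iUnion_le_of_le (hnuci j) _ hι (fun w => le_trans (hF w.1 w.2.1).le (hμle j))
    obtain ⟨xtop, hxtopG, hxtopU⟩ : ∃ xt ∈ G (j+1), xt ∉ U := by
      refine exists_mem_notMem (lt_of_le_of_lt hUle ?_)
      refine lt_of_lt_of_le (hstrict j) ?_
      have : max 1 (j+1) = j+1 := by omega
      simpa [this] using hlow (j+1) le_rfl
    obtain ⟨x', hx'mem, hx'esc⟩ := ih (insert xtop Fix) G
      (fun i hi => hlow i (by omega)) (fun i hi => hhigh i (by omega))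
      (fun i1 i2 h1 h2 => hdisj i1 i2 h1 (by omega))
      (by
        intro i hi a ha
        rcases Finset.mem_insert.mp ha with rfl | ha
        · intro haG
          exact hdisj i (j+1) (by omega) le_rfl a haG hxtopG
        · exact hfix i (by omega) a ha)
    refine ⟨fun i => if i = j+1 then xtop else x' i, ?_, ?_⟩
    · intro i hi
      by_cases hij : i = j+1
      · subst hij; simpa using hxtopG
      · have : i ≤ j := by omega
        simpa [hij] using hx'mem i this
    · intro v hvk hvsub hne
      by_cases htopv : xtop ∈ v
      · -- escaper comes from the induction hypothesis
        obtain ⟨i0, hi0, hxi0⟩ := hne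
        have hi0ne : i0 ≠ j+1 := by
          intro hEq
          subst hEq
          simp only [if_pos rfl] at hxi0
          exact hxi0 htopv
        have hi0j : i0 ≤ j := by omega
        have hvsub' : ↑v ⊆ ↑(insert xtop Fix) ∪ {z : A | ∃ i, i ≤ j ∧ z = x' i} := by
          intro y hyv
          rcases hvsub hyv with hyFix | ⟨i, hi, rfl⟩
          · exact Or.inl (by simpa using Or.inr hyFix)
          · by_cases hij : i = j+1
            · subst hij
              simp only [if_pos rfl]
              exact Or.inl (by simp)
            · have : i ≤ j := by omega
              exact Or.inr ⟨i, this, by simp [hij]⟩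
        obtain ⟨i, hi, hinv, hinF⟩ := hx'esc v hvk hvsub'
          ⟨i0, hi0j, by simpa [hi0ne] using hxi0⟩
        have hij : i ≠ j+1 := by omega
        exact ⟨i, by omega, by simpa [hij] using hinv, by simpa [hij] using hinF⟩
      · -- escaper is xtop
        refine ⟨j+1, le_rfl, by simpa using htopv, ?_⟩
        simp only [if_pos rfl]
        intro hxtopF
        refine hxtopU ?_
        have hvZ : ↑v ⊆ Z := by
          intro y hyv
          rcases hvsub hyv with hyFix | ⟨i, hi, rfl⟩
          · rw [hZdef]; exact Or.inl hyFix
          · by_cases hij : i = j+1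
            · subst hij
              simp only [if_pos rfl] at hyv
              exact absurd hyv htopv
            · have hijle : i ≤ j := by omega
              rw [hZdef]
              refine Or.inr ?_
              have hiR : i ∈ Finset.range (j+1) := Finset.mem_range.mpr (by omega)
              exact Set.mem_biUnion hiR (by simpa [hij] using hx'mem i hijle)
        rw [hUdef]
        exact Set.mem_iUnion.mpr ⟨⟨v, hvk, hvZ⟩, hxtopF⟩


/-- specialization of `towerGen` to the `nuc` chain -/
lemma tower (μ : Cardinal.{u}) (hμ : ℵ₀ ≤ μ) :
    ∀ j : ℕ, ∀ S : Set A, #S ≤ nuc μ j →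
    ∃ D : Finset A → Set A,
      (∀ v, #(D v) < μ) ∧ (∀ v, D v ∩ ↑v = ∅) ∧ (∀ v, D v ⊆ S) ∧
      (∀ u : Finset A, u.card = j + 2 → ↑u ⊆ S →
        ∃ v : Finset A, v ⊆ u ∧ v.card = j + 1 ∧ (D v ∩ ↑u).Nonempty) :=
  towerGen μ hμ (nuc μ) (le_of_eq rfl) (fun hc => lt_nuc_iff.mp hc)
    (fun j => lt_of_lt_of_le aleph0_pos (aleph0_le_nuc hμ j))

/-- specialization of `survivorGen` to the `nuc` chain -/
lemma survivor (μ : Cardinal.{u}) (hμ : ℵ₀ ≤ μ) (k : ℕ) (F : Finset A → Set A)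
    (hF : ∀ v : Finset A, v.card = k → #(F v) < μ) :
    ∀ j : ℕ, 1 ≤ j → ∀ (Fix : Finset A) (G : ℕ → Set A),
    (∀ i, i ≤ j → nuc μ (max 1 i) ≤ #(G i)) →
    (∀ i, i ≤ j → #(G i) ≤ nuc μ (max 1 i)) →
    (∀ i1 i2, i1 < i2 → i2 ≤ j → ∀ a, a ∈ G i1 → a ∉ G i2) →
    (∀ i, i ≤ j → ∀ a ∈ Fix, a ∉ G i) →
    ∃ x : ℕ → A, (∀ i, i ≤ j → x i ∈ G i) ∧
      (∀ v : Finset A, v.card = k →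
        (↑v ⊆ ↑Fix ∪ {z : A | ∃ i, i ≤ j ∧ z = x i}) →
        (∃ i, i ≤ j ∧ x i ∉ v) →
        ∃ i, i ≤ j ∧ x i ∉ v ∧ x i ∉ F v) :=
  survivorGen μ hμ k F hF (nuc μ) (aleph0_le_nuc hμ) (fun _ _ h => nuc_mono μ h)
    (le_nuc μ) (nuc_lt_nuc_succ μ 0) (fun hc => lt_nuc_iff.mp hc) (nuc_lt_nuc_succ μ)


/-- main construction, with explicit universe -/
theorem main (A : Type u) [Infinite A] (μ : Cardinal.{u}) (hμ : ℵ₀ ≤ μ)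
    (k n : ℕ) (hk : 2 ≤ k) (hkn : k < n) (h : SetMappingArrow A μ k n) :
    ∃ R : (Fin (k + 1) → A) → Prop,
      (∀ (α : Fin (k + 1) → A) (σ : Equiv.Perm (Fin (k + 1))), R α → R (α ∘ σ)) ∧
      (∀ α : Fin (k + 1) → A, ¬ Function.Injective α → ¬ R α) ∧
      (∀ w : Finset A, w.card = n + 1 → ¬ IsCompleteHypergraph k R w) ∧
      (∀ F : Finset A → Set A,
        (∀ v : Finset A, v.card = k → ↑v ⊆ F v ∧ Cardinal.mk (F v) < μ) →
        ∃ w : Finset A, w.card = n ∧ IsCompleteHypergraph k R w ∧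
          ∀ v ⊆ w, v.card = k → ¬ (↑w ⊆ F v)) := by
  classical
  -- Step 1 : the ground type is large : nuc μ k ≤ #A
  have hbig : nuc μ k ≤ #A := by
    by_contra hsmall
    push_neg at hsmall
    obtain ⟨m, hm⟩ : ∃ m, k = m + 1 := ⟨k - 1, by omega⟩
    have hAle : #(Set.univ : Set A) ≤ nuc μ m := by
      rw [Cardinal.mk_univ]
      exact lt_nuc_iff.mp (hm ▸ hsmall)
    obtain ⟨D, hD1, hD2, _, hD4⟩ := tower μ hμ m Set.univ hAle
    obtain ⟨X, hXcard, hXfree⟩ := h D (fun x hx => ⟨hD2 x, hD1 x⟩)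
    obtain ⟨U, hUX, hUcard⟩ := Finset.exists_subset_card_eq
      (show k + 1 ≤ X.card by rw [hXcard]; omega)
    obtain ⟨v, hvU, hvcard, z, hzD, hzu⟩ := hD4 U (by omega) (by simp)
    have hfree := hXfree v (hvU.trans hUX) (by omega)
    have hzX : z ∈ (↑X : Set A) := by
      have : z ∈ U := hzu
      exact_mod_cast hUX this
    have : z ∈ D v ∩ ↑X := ⟨hzD, hzX⟩
    rw [hfree] at this
    exact this
  -- Step 2 : the indexed structure
  set κ := nuc μ k with hκdef
  have hκinf : ℵ₀ ≤ κ := aleph0_le_nuc hμ k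
  have hn0 : 0 < n := by omega
  set T := (ULift.{u} (Fin n)) × κ.out with hTdef
  have hmkT : #T ≤ #A := by
    rw [hTdef]
    refine le_trans (le_of_eq (Cardinal.mk_prod _ _)) ?_
    rw [Cardinal.mk_out]
    have h1 : Cardinal.lift.{u,u} #(ULift.{u} (Fin n)) = (n : Cardinal.{u}) := by
      simp
    have h2 : Cardinal.lift.{u,u} κ = κ := Cardinal.lift_id κ
    rw [h1, h2]
    refine le_trans (le_of_eq ?_) hbig
    exact Cardinal.mul_eq_right hκinf
      (le_trans (Cardinal.nat_lt_aleph0 n).le hκinf) (Nat.cast_ne_zero.mpr (by omega))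
  obtain ⟨e⟩ := (Cardinal.le_def T A).mp hmkT
  set χ : A → Option (Fin n) := fun a =>
    if hex : ∃ p : T, e p = a then some (hex.choose.1.down) else none with hχdef
  have hχe : ∀ p : T, χ (e p) = some p.1.down := by
    intro p
    have hex : ∃ q : T, e q = e p := ⟨p, rfl⟩
    rw [hχdef]
    simp only [dif_pos hex]
    have : hex.choose = p := e.injective hex.choose_spec
    rw [this]
  -- the relation
  set R : (Fin (k + 1) → A) → Prop := fun α =>
    (∀ i, (χ (α i)).isSome) ∧ (∀ i j, χ (α i) = χ (α j) → i = j) with hRdef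
  refine ⟨R, ?_, ?_, ?_, ?_⟩
  · rintro α σ ⟨h1, h2⟩
    exact ⟨fun i => h1 (σ i), fun i j hij => σ.injective (h2 _ _ hij)⟩
  · intro α hninj hR
    exact hninj fun a b hab => hR.2 a b (congrArg χ hab)
  · -- no complete hypergraph on n+1 vertices
    intro w hwcard hcomp
    -- every element of w has χ defined, and χ is injective on w
    have hmem : ∀ p ∈ w, ∀ q ∈ w, p ≠ q → (χ p).isSome ∧ (χ p = χ q → p = q) := by
      intro p hp q hq hpq
      have hsub : {p, q} ⊆ w := by
        intro y hy
        rcases Finset.mem_insert.mp hy with rfl | hy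
        · exact hp
        · rw [Finset.mem_singleton.mp hy]; exact hq
      have hcard2 : ({p, q} : Finset A).card = 2 := Finset.card_pair hpq
      obtain ⟨u, hpqu, huw, hucard⟩ := Finset.exists_subsuperset_card_eq (n := k - 1 + ({p, q} : Finset A).card) hsub
        (by omega) (by rw [hcard2, hwcard]; omega)
      rw [hcard2] at hucard
      have hucard' : u.card = k + 1 := by rw [hucard]; omega
      set α : Fin (k+1) → A := fun i => (u.equivFin.symm (Fin.cast hucard'.symm i) : A)
        with hαdef
      have hαinj : Function.Injective α := by
        intro i j hij
        have h1 := Subtype.ext hij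
        have h2 := u.equivFin.symm.injective h1
        exact Fin.ext (by simpa using congrArg Fin.val h2)
      have hαmem : ∀ i, α i ∈ w := fun i => huw (u.equivFin.symm _).2
      have hR := hcomp α hαinj hαmem
      -- p and q are values of α
      have hpα : ∃ i, α i = p := by
        have hpu : p ∈ u := hpqu (by simp)
        refine ⟨Fin.cast hucard' (u.equivFin ⟨p, hpu⟩), ?_⟩
        rw [hαdef]
        simp
      obtain ⟨ip, hip⟩ := hpα
      have hqα : ∃ i, α i = q := by
        have hqu : q ∈ u := hpqu (by simp)
        refine ⟨Fin.cast hucard' (u.equivFin ⟨q, hqu⟩), ?_⟩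
        rw [hαdef]
        simp
      obtain ⟨iq, hiq⟩ := hqα
      constructor
      · have := hR.1 ip
        rwa [hip] at this
      · intro hχpq
        have : ip = iq := hR.2 ip iq (by rw [hip, hiq, hχpq])
        rw [← hip, ← hiq, this]
    -- pigeonhole
    have hsome : ∀ p ∈ w, (χ p).isSome := by
      intro p hp
      obtain ⟨q, hq, hpq⟩ := Finset.exists_mem_ne (s := w) (by omega) p
      exact (hmem p hp q hq (Ne.symm hpq)).1
    set g : A → Fin n := fun a => (χ a).getD ⟨0, hn0⟩ with hgdef
    have hginj : ∀ p ∈ w, ∀ q ∈ w, g p = g q → p = q := by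
      intro p hp q hq hgpq
      by_cases hpq : p = q
      · exact hpq
      · refine (hmem p hp q hq hpq).2 ?_
        obtain ⟨ip, hip⟩ := Option.isSome_iff_exists.mp (hsome p hp)
        obtain ⟨iq, hiq⟩ := Option.isSome_iff_exists.mp (hsome q hq)
        rw [hip, hiq]
        rw [hgdef] at hgpq
        simp only [hip, hiq, Option.getD_some] at hgpq
        rw [hgpq]
    have hle : w.card ≤ n := by
      have := Finset.card_le_card_of_injOn g (fun a _ => Finset.mem_univ (g a)) hginj
      simpa using this
    omega
  · -- every strong set mapping misses a complete w
    intro F hF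
    set ec := n - (k + 1) with hecdef
    have hecn : ec + (k + 1) = n := by omega
    have hκne : Nonempty κ.out := by
      rw [← Cardinal.mk_ne_zero_iff, Cardinal.mk_out]
      exact ne_of_gt (lt_of_lt_of_le aleph0_pos hκinf)
    obtain ⟨t0⟩ := hκne
    -- early singleton cells
    set earlyPt : ℕ → A := fun i => e (⟨⟨i % n, Nat.mod_lt _ hn0⟩⟩, t0) with hearlydef
    set Fix : Finset A := (Finset.range ec).image earlyPt with hFixdef
    have hχearly : ∀ i, χ (earlyPt i) = some ⟨i % n, Nat.mod_lt _ hn0⟩ := by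
      intro i
      rw [hearlydef]
      exact hχe _
    -- the pools
    have hSex : ∀ i : ℕ, ∃ S : Set κ.out, #S = nuc μ (max 1 (min i k)) := by
      intro i
      refine Cardinal.le_mk_iff_exists_set.mp ?_
      rw [Cardinal.mk_out]
      exact nuc_mono μ (Nat.max_le.mpr ⟨by omega, by omega⟩)
    set S : ℕ → Set κ.out := fun i => (hSex i).choose with hSdef
    have hS : ∀ i, #(S i) = nuc μ (max 1 (min i k)) := fun i => (hSex i).choose_spec
    set gpt : ℕ → κ.out → A := fun i t => e (⟨⟨ec + min i k, by omega⟩⟩, t) with hgptdef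
    have hgptinj : ∀ i, Function.Injective (gpt i) := by
      intro i t1 t2 h12
      have := e.injective h12
      exact congrArg Prod.snd this
    set G : ℕ → Set A := fun i => (gpt i) '' (S i) with hGdef
    have hχgpt : ∀ i t, χ (gpt i t) = some ⟨ec + min i k, by omega⟩ := by
      intro i t
      rw [hgptdef]
      exact hχe _
    have hGmk : ∀ i, i ≤ k → #(G i) = nuc μ (max 1 i) := by
      intro i hik
      rw [hGdef]
      simp only
      rw [Cardinal.mk_image_eq (hgptinj i), hS i, Nat.min_eq_left hik]
    have hGdisj : ∀ i1 i2, i1 < i2 → i2 ≤ k → ∀ a, a ∈ G i1 → a ∉ G i2 := by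
      intro i1 i2 h12 h2k a ha1 ha2
      obtain ⟨t1, _, h1⟩ := ha1
      obtain ⟨t2, _, h2⟩ := ha2
      rw [← h2] at h1
      have := e.injective h1
      have h3 := congrArg (fun q => q.1.down.val) this
      simp only [hgptdef] at h3
      have hm1 : min i1 k = i1 := Nat.min_eq_left (by omega)
      have hm2 : min i2 k = i2 := Nat.min_eq_left h2k
      omega
    have hGfix : ∀ i, i ≤ k → ∀ a ∈ Fix, a ∉ G i := by
      intro i hik a haf haG
      obtain ⟨i0, hi0, rfl⟩ := Finset.mem_image.mp haf
      have hi0ec : i0 < ec := Finset.mem_range.mp hi0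
      obtain ⟨t, _, hgt⟩ := haG
      have := e.injective hgt
      have h3 := congrArg (fun q => q.1.down.val) this
      simp only [hgptdef, hearlydef] at h3
      have : i0 % n = i0 := Nat.mod_eq_of_lt (by omega)
      omega
    obtain ⟨x, hxmem, hesc⟩ := survivor μ hμ k F (fun v hv => (hF v hv).2) k (by omega)
      Fix G (fun i hik => (hGmk i hik).ge) (fun i hik => (hGmk i hik).le) hGdisj hGfix
    have hχx : ∀ (i : ℕ) (hik : i ≤ k), χ (x i) = some ⟨ec + i, by omega⟩ := by
      intro i hik
      obtain ⟨t, _, hgt⟩ := hxmem i hik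
      rw [← hgt, hχgpt i t]
      congr 1
      exact Fin.ext (by simp [Nat.min_eq_left hik])
    -- the witness set
    set xs : Finset A := (Finset.range (k+1)).image x with hxsdef
    set w : Finset A := Fix ∪ xs with hwdef
    -- characterization of elements of w
    have hwchar : ∀ a ∈ w, (∃ i, i < ec ∧ a = earlyPt i) ∨ (∃ i, i ≤ k ∧ a = x i) := by
      intro a ha
      rcases Finset.mem_union.mp ha with ha | ha
      · obtain ⟨i, hi, rfl⟩ := Finset.mem_image.mp ha
        exact Or.inl ⟨i, Finset.mem_range.mp hi, rfl⟩
      · obtain ⟨i, hi, rfl⟩ := Finset.mem_image.mp ha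
        exact Or.inr ⟨i, by have := Finset.mem_range.mp hi; omega, rfl⟩
    have hwsome : ∀ a ∈ w, (χ a).isSome := by
      intro a ha
      rcases hwchar a ha with ⟨i, _, rfl⟩ | ⟨i, hik, rfl⟩
      · rw [hχearly i]; rfl
      · rw [hχx i hik]; rfl
    have hχinj : ∀ a ∈ w, ∀ b ∈ w, χ a = χ b → a = b := by
      intro a ha b hb hab
      rcases hwchar a ha with ⟨i, hi, rfl⟩ | ⟨i, hik, rfl⟩ <;>
        rcases hwchar b hb with ⟨i', hi', rfl⟩ | ⟨i', hik', rfl⟩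
      · rw [hχearly i, hχearly i'] at hab
        have : i % n = i' % n := by
          have := congrArg (fun o => (Option.getD o ⟨0, hn0⟩).val) hab
          simpa using this
        have hii : i = i' := by
          rw [Nat.mod_eq_of_lt (by omega), Nat.mod_eq_of_lt (by omega)] at this
          exact this
        rw [hii]
      · rw [hχearly i, hχx i' hik'] at hab
        have : i % n = ec + i' := by
          have := congrArg (fun o => (Option.getD o ⟨0, hn0⟩).val) hab
          simpa using this
        rw [Nat.mod_eq_of_lt (by omega)] at this
        omega
      · rw [hχx i hik, hχearly i'] at hab
        have : ec + i = i' % n := by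
          have := congrArg (fun o => (Option.getD o ⟨0, hn0⟩).val) hab
          simpa using this
        rw [Nat.mod_eq_of_lt (by omega)] at this
        omega
      · rw [hχx i hik, hχx i' hik'] at hab
        have : ec + i = ec + i' := by
          have := congrArg (fun o => (Option.getD o ⟨0, hn0⟩).val) hab
          simpa using this
        have : i = i' := by omega
        rw [this]
    -- cardinality of w
    have hFixcard : Fix.card = ec := by
      rw [hFixdef]
      rw [Finset.card_image_of_injOn, Finset.card_range]
      intro i hi i' hi' hii
      have h1 := congrArg χ hii
      rw [hχearly i, hχearly i'] at h1
      have := congrArg (fun o => (Option.getD o ⟨0, hn0⟩).val) h1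
      simp only [Option.getD_some] at this
      rw [Nat.mod_eq_of_lt (by have := Finset.mem_range.mp hi; omega),
        Nat.mod_eq_of_lt (by have := Finset.mem_range.mp hi'; omega)] at this
      exact this
    have hxscard : xs.card = k + 1 := by
      rw [hxsdef]
      rw [Finset.card_image_of_injOn, Finset.card_range]
      intro i hi i' hi' hii
      have h1 := congrArg χ hii
      rw [hχx i (by have := Finset.mem_range.mp hi; omega),
        hχx i' (by have := Finset.mem_range.mp hi'; omega)] at h1
      have := congrArg (fun o => (Option.getD o ⟨0, hn0⟩).val) h1
      simp only [Option.getD_some] at this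
      omega
    have hdisjwx : Disjoint Fix xs := by
      rw [Finset.disjoint_left]
      intro a haf hax
      obtain ⟨i, hi, rfl⟩ := Finset.mem_image.mp haf
      obtain ⟨i', hi', hxi⟩ := Finset.mem_image.mp hax
      have h1 := congrArg χ hxi
      rw [hχx i' (by have := Finset.mem_range.mp hi'; omega), hχearly i] at h1
      have := congrArg (fun o => (Option.getD o ⟨0, hn0⟩).val) h1
      simp only [Option.getD_some] at this
      rw [Nat.mod_eq_of_lt (by have := Finset.mem_range.mp hi; omega)] at this
      have := Finset.mem_range.mp hi
      omega
    have hwcard : w.card = n := by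
      rw [hwdef, Finset.card_union_of_disjoint hdisjwx, hFixcard, hxscard]
      omega
    refine ⟨w, hwcard, ?_, ?_⟩
    · -- completeness
      intro α hαinj hαmem
      constructor
      · intro i
        exact hwsome (α i) (hαmem i)
      · intro i j hij
        exact hαinj (hχinj (α i) (hαmem i) (α j) (hαmem j) hij)
    · -- not covered
      intro v hvw hvk hwF
      have hvsub : ↑v ⊆ ↑Fix ∪ {z : A | ∃ i, i ≤ k ∧ z = x i} := by
        intro y hyv
        have hyw : y ∈ w := hvw hyv
        rcases hwchar y hyw with ⟨i, hi, rfl⟩ | ⟨i, hik, rfl⟩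
        · exact Or.inl (by
            rw [hFixdef]
            simp only [Finset.coe_image, Set.mem_image]
            exact ⟨i, by simpa using hi, rfl⟩)
        · exact Or.inr ⟨i, hik, rfl⟩
      have hne : ∃ i, i ≤ k ∧ x i ∉ v := by
        by_contra hcon
        push_neg at hcon
        have hxsv : xs ⊆ v := by
          rw [hxsdef]
          intro a ha
          obtain ⟨i, hi, rfl⟩ := Finset.mem_image.mp ha
          exact hcon i (by have := Finset.mem_range.mp hi; omega)
        have := Finset.card_le_card hxsv
        omega
      obtain ⟨i, hik, hinv, hinF⟩ := hesc v hvk hvsub hne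
      refine hinF (hwF ?_)
      have : x i ∈ xs := by
        rw [hxsdef]
        exact Finset.mem_image.mpr ⟨i, Finset.mem_range.mpr (by omega), rfl⟩
      have : x i ∈ w := by
        rw [hwdef]; exact Finset.mem_union_right _ this
      exact_mod_cast this

end Stmt4Aux

/-- Lemma 1.8 of the paper: if `(λ,k,μ) → n` with `n > k ≥ 2`, there is a
symmetric irreflexive `(k+1)`-ary relation `R` on `λ` with no complete
hypergraph on `n+1` vertices, such that every strong set mapping
`F : [λ]^k → [λ]^{<μ}` fails to cover some complete `R`-hypergraph `w ∈ [λ]^n`. -/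
theorem stmt4 (A : Type*) [Infinite A] (μ : Cardinal) (hμ : ℵ₀ ≤ μ)
    (k n : ℕ) (hk : 2 ≤ k) (hkn : k < n) (h : SetMappingArrow A μ k n) :
    ∃ R : (Fin (k + 1) → A) → Prop,
      (∀ (α : Fin (k + 1) → A) (σ : Equiv.Perm (Fin (k + 1))), R α → R (α ∘ σ)) ∧
      (∀ α : Fin (k + 1) → A, ¬ Function.Injective α → ¬ R α) ∧
      (∀ w : Finset A, w.card = n + 1 → ¬ IsCompleteHypergraph k R w) ∧
      (∀ F : Finset A → Set A,
        (∀ v : Finset A, v.card = k → ↑v ⊆ F v ∧ Cardinal.mk (F v) < μ) →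
        ∃ w : Finset A, w.card = n ∧ IsCompleteHypergraph k R w ∧
          ∀ v ⊆ w, v.card = k → ¬ (↑w ⊆ F v)) :=
  Stmt4Aux.main A μ hμ k n hk hkn h
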